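/- (Lemma 'Large Deviations', expectation part: exponential averaging is unbiased.) For every integer h ≥ 1, every edge-weight assignment with τ_v > 0 for all nonempty v, and every pair of distinct binary strings a, b of the same length m with 1 ≤ m ≤ h: ∑_{x : V → Φ} P(x) S_a(x) S_b(x) = e^{−τ(a,b)}. Equivalently, the exponential average e^{−τ̄(a,b)} = 2^{−2(h−m)} ∑_{a'∈A} ∑_{b'∈B} Θ_{a,a'}^{−1} Θ_{b,b'}^{−1} e^{−τ̂(a',b')} satisfies E[e^{−τ̄(a,b)}] = e^{−τ(a,b)}. -/

import Mathlib

open scoped BigOperators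

/-- The matrix exponential of a real `Φ × Φ` matrix. -/
noncomputable def matExp {Φ : Type*} [Fintype Φ] [DecidableEq Φ] (A : Matrix Φ Φ ℝ) :
    Matrix Φ Φ ℝ := NormedSpace.exp A

/-- Sum of edge weights along the ancestor path of `v` (heap indexing of the binary
tree: vertices are positive integers, the root is `1`, and the parent of `v ≥ 2` is
`v / 2`), stopping at (and excluding) the ancestor `a`.  This is `τ(a, v)`. -/
noncomputable def pathSum (τ : ℕ → ℝ) (a : ℕ) (v : ℕ) : ℝ :=
  if _h : v ≤ a then 0 else τ v + pathSum τ a (v / 2)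
termination_by v
decreasing_by omega

/-- Lowest common ancestor (longest common prefix) of two same-level vertices in heap
indexing. -/
def lca (a b : ℕ) : ℕ :=
  if a = b then a else lca (a / 2) (b / 2)
termination_by a + b
decreasing_by omega

/-- Tree distance `τ(a,b) = τ(c,a) + τ(c,b)` where `c` is the longest common prefix of
the same-level vertices `a` and `b`. -/
noncomputable def treeDist (τ : ℕ → ℝ) (a b : ℕ) : ℝ :=
  pathSum τ (lca a b) a + pathSum τ (lca a b) b

/-- Interpret a heap-index vertex `v ∈ {1, …, 2^{h+1} − 1}` of the complete binary tree
of depth `h` as an index into configurations (binary strings of length `m ≤ h`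
correspond to the integers in `[2^m, 2^{m+1})`). -/
def idx (h v : ℕ) : Fin (2 ^ (h + 1) - 1) :=
  ⟨(v - 1) % (2 ^ (h + 1) - 1), Nat.mod_lt _ (by
    have : 2 ^ 1 ≤ 2 ^ (h + 1) := Nat.pow_le_pow_right (by norm_num) (by omega)
    omega)⟩

/-- The GTR law on the complete binary tree of depth `h`: the probability
`P(x) = π(x_ρ) ∏_{v nonempty} (exp(τ_v Q))_{x_{parent(v)}, x_v}` of a configuration
`x` (configurations assign a state to each of the `2^{h+1} − 1` vertices). -/
noncomputable def gtrP {Φ : Type*} [Fintype Φ] [DecidableEq Φ]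
    (h : ℕ) (π : Φ → ℝ) (Q : Matrix Φ Φ ℝ) (τ : ℕ → ℝ)
    (x : Fin (2 ^ (h + 1) - 1) → Φ) : ℝ :=
  π (x (idx h 1)) *
    ∏ v ∈ Finset.Ico 2 (2 ^ (h + 1)),
      (matExp (τ v • Q)) (x (idx h (v / 2))) (x (idx h v))

/-- The estimator `S(x) = ∑_{ℓ leaf} Ψ(ℓ) ν_{x_ℓ} / Θ_{ρ,ℓ}` with `Θ_{ρ,ℓ} = e^{−τ(ρ,ℓ)}`. -/
noncomputable def estS {Φ : Type*} [Fintype Φ] [DecidableEq Φ]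
    (h : ℕ) (ν : Φ → ℝ) (τ Ψ : ℕ → ℝ) (x : Fin (2 ^ (h + 1) - 1) → Φ) : ℝ :=
  ∑ ℓ ∈ Finset.Ico (2 ^ h) (2 ^ (h + 1)),
    Ψ ℓ * ν (x (idx h ℓ)) * Real.exp (pathSum τ 1 ℓ)

/-- `K_Ψ = ∑_{v nonempty} (1 − e^{−2τ_v}) e^{2τ(ρ,v)} Ψ(v)²`. -/
noncomputable def Kflow (h : ℕ) (τ Ψ : ℕ → ℝ) : ℝ :=
  ∑ v ∈ Finset.Ico 2 (2 ^ (h + 1)),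
    (1 - Real.exp (-(2 * τ v))) * Real.exp (2 * pathSum τ 1 v) * Ψ v ^ 2

/-- `Ψ` is a unit flow from the root to the leaves of the depth-`h` tree: nonnegative,
`Ψ(ρ) = 1`, and `Ψ(v) = Ψ(v0) + Ψ(v1)` for internal vertices. -/
def IsUnitFlow (h : ℕ) (Ψ : ℕ → ℝ) : Prop :=
  Ψ 1 = 1 ∧ (∀ v, 1 ≤ v → v < 2 ^ (h + 1) → 0 ≤ Ψ v) ∧
    ∀ v, 1 ≤ v → v < 2 ^ h → Ψ v = Ψ (2 * v) + Ψ (2 * v + 1)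

/-- `S_a`, the implicit ancestral-state estimator at the vertex `a` on level `m`
(heap indexing: the leaves below `a` are the integers in `[a·2^{h−m}, (a+1)·2^{h−m})`):
`S_a(x) = 2^{−(h−m)} ∑_{a′ ∈ A} ν_{x_{a′}} / Θ_{a,a′}` with `Θ_{a,a′} = e^{−τ(a,a′)}`. -/
noncomputable def estSAt {Φ : Type*} [Fintype Φ] [DecidableEq Φ]
    (h m : ℕ) (ν : Φ → ℝ) (τ : ℕ → ℝ) (a : ℕ) (x : Fin (2 ^ (h + 1) - 1) → Φ) : ℝ :=
  ∑ a' ∈ Finset.Ico (a * 2 ^ (h - m)) ((a + 1) * 2 ^ (h - m)),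
    ((2 : ℝ) ^ (h - m))⁻¹ * ν (x (idx h a')) * Real.exp (pathSum τ a a')

/- ===================== auxiliary lemmas ===================== -/

section PathLca

lemma pathSum_le' (τ : ℕ → ℝ) {a v : ℕ} (h : v ≤ a) : pathSum τ a v = 0 := by
  rw [pathSum]; simp [h]

lemma pathSum_gt' (τ : ℕ → ℝ) {a v : ℕ} (h : a < v) :
    pathSum τ a v = τ v + pathSum τ a (v / 2) := by
  rw [pathSum]; simp [Nat.not_le_of_lt h]

lemma lca_self' (a : ℕ) : lca a a = a := by rw [lca]; simp

lemma lca_ne' {a b : ℕ} (h : a ≠ b) : lca a b = lca (a/2) (b/2) := by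
  rw [lca]; simp [h]

lemma lca_le' : ∀ a b : ℕ, lca a b ≤ a ∧ lca a b ≤ b := by
  intro a b
  induction a, b using lca.induct with
  | case1 a => simp [lca_self']
  | case2 a b hne ih => rw [lca_ne' hne]; omega

lemma descend_half {a k a' : ℕ} (h1 : a * 2^(k+1) ≤ a') (h2 : a' < (a+1) * 2^(k+1)) :
    a * 2^k ≤ a'/2 ∧ a'/2 < (a+1) * 2^k := by
  constructor
  · rw [Nat.le_div_iff_mul_le (by norm_num)]
    calc a * 2^k * 2 = a * 2^(k+1) := by ring
      _ ≤ a' := h1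
  · rw [Nat.div_lt_iff_lt_mul (by norm_num)]
    calc a' < (a+1)*2^(k+1) := h2
      _ = (a+1)*2^k*2 := by ring

lemma pathSum_trans (τ : ℕ → ℝ) (c a : ℕ) (hca : c ≤ a) (ha : 1 ≤ a) :
    ∀ k a', a * 2^k ≤ a' → a' < (a+1) * 2^k →
      pathSum τ c a' = pathSum τ a a' + pathSum τ c a := by
  intro k
  induction k with
  | zero =>
    intro a' h1 h2
    simp only [pow_zero, mul_one] at h1 h2
    have : a' = a := by omega
    subst this
    rw [pathSum_le' τ le_rfl]; ring
  | succ k ih =>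
    intro a' h1 h2
    have h2k : (2:ℕ) ≤ 2^(k+1) := by
      have : (2:ℕ)^1 ≤ 2^(k+1) := Nat.pow_le_pow_right (by norm_num) (by omega)
      simpa using this
    have haa' : a < a' := by
      have : a * 2 ≤ a * 2^(k+1) := Nat.mul_le_mul_left a h2k
      omega
    have hca' : c < a' := lt_of_le_of_lt hca haa'
    obtain ⟨hh1, hh2⟩ := descend_half h1 h2
    rw [pathSum_gt' τ hca', pathSum_gt' τ haa', ih _ hh1 hh2]; ring

lemma div_pow_interval {a k a' : ℕ} (h1 : a * 2^k ≤ a') (h2 : a' < (a+1) * 2^k) :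
    a' / 2^k = a := Nat.div_eq_of_lt_le h1 h2

lemma lca_desc : ∀ k a b a' b', a ≠ b → a * 2^k ≤ a' → a' < (a+1) * 2^k →
    b * 2^k ≤ b' → b' < (b+1) * 2^k → lca a' b' = lca a b := by
  intro k
  induction k with
  | zero =>
    intro a b a' b' hab h1 h2 h3 h4
    simp only [pow_zero, mul_one] at *
    have e1 : a' = a := by omega
    have e2 : b' = b := by omega
    rw [e1, e2]
  | succ k ih =>
    intro a b a' b' hab h1 h2 h3 h4
    have hne : a' ≠ b' := by
      intro he
      exact hab (by rw [← div_pow_interval h1 h2, he, div_pow_interval h3 h4])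
    obtain ⟨ha1, ha2⟩ := descend_half h1 h2
    obtain ⟨hb1, hb2⟩ := descend_half h3 h4
    rw [lca_ne' hne]
    exact ih a b _ _ hab ha1 ha2 hb1 hb2

lemma idx_inj (h : ℕ) {v w : ℕ} (hv1 : 1 ≤ v) (hv2 : v < 2^(h+1))
    (hw1 : 1 ≤ w) (hw2 : w < 2^(h+1)) (hvw : idx h v = idx h w) : v = w := by
  have h2 : 2 ^ 1 ≤ 2 ^ (h + 1) := Nat.pow_le_pow_right (by norm_num) (by omega)
  have hv : (v - 1) % (2^(h+1) - 1) = v - 1 := Nat.mod_eq_of_lt (by omega)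
  have hw : (w - 1) % (2^(h+1) - 1) = w - 1 := Nat.mod_eq_of_lt (by omega)
  have := congrArg Fin.val hvw
  simp only [idx, hv, hw] at this
  omega

lemma idx_ne (h : ℕ) {v w : ℕ} (hv1 : 1 ≤ v) (hv2 : v < 2^(h+1))
    (hw1 : 1 ≤ w) (hw2 : w < 2^(h+1)) (hvw : v ≠ w) : idx h v ≠ idx h w :=
  fun hc => hvw (idx_inj h hv1 hv2 hw1 hw2 hc)

end PathLca

section MatExpFacts

attribute [local instance] Matrix.linftyOpNormedRing Matrix.linftyOpNormedAlgebra

variable {Φ : Type*} [Fintype Φ] [DecidableEq Φ]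

lemma matExp_mulVec_eigen (A : Matrix Φ Φ ℝ) (v : Φ → ℝ) (c : ℝ)
    (hv : A.mulVec v = c • v) : (matExp A).mulVec v = Real.exp c • v := by
  have hpow : ∀ n : ℕ, (A ^ n).mulVec v = c ^ n • v := by
    intro n
    induction n with
    | zero => simp [Matrix.one_mulVec]
    | succ n ih =>
      rw [pow_succ', ← Matrix.mulVec_mulVec, ih, Matrix.mulVec_smul, hv, smul_smul, pow_succ,
        mul_comm]
  have hsum : Summable (fun n : ℕ => ((n.factorial : ℝ))⁻¹ • A ^ n) :=
    NormedSpace.expSeries_summable' (𝕂 := ℝ) A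
  let L : Matrix Φ Φ ℝ →ₗ[ℝ] (Φ → ℝ) :=
    { toFun := fun B => B.mulVec v
      map_add' := fun B C => Matrix.add_mulVec B C v
      map_smul' := fun r B => Matrix.smul_mulVec r B v }
  have hL : Continuous L := L.continuous_of_finiteDimensional
  have key : L (∑' n : ℕ, ((n.factorial : ℝ))⁻¹ • A ^ n)
      = ∑' n : ℕ, ((n.factorial : ℝ))⁻¹ • ((A ^ n).mulVec v) := by
    rw [← (hsum.hasSum.map L hL).tsum_eq]
    refine tsum_congr fun n => ?_
    simp [Function.comp, map_smul, L]
  have hLdef : L (∑' n : ℕ, ((n.factorial : ℝ))⁻¹ • A ^ n) = (matExp A).mulVec v := by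
    rw [matExp, NormedSpace.exp_eq_tsum ℝ]; rfl
  rw [← hLdef, key]
  have h2 : ∀ n : ℕ, ((n.factorial : ℝ))⁻¹ • ((A ^ n).mulVec v)
      = (c ^ n / n.factorial) • v := by
    intro n; rw [hpow, smul_smul, div_eq_inv_mul]
  rw [tsum_congr h2, Summable.tsum_smul_const]
  · rw [Real.exp_eq_exp_ℝ, NormedSpace.exp_eq_tsum ℝ]
    congr 1
    exact tsum_congr fun n => by rw [smul_eq_mul, div_eq_inv_mul]
  · exact Real.summable_pow_div_factorial c

lemma matExp_vecMul_stat (A : Matrix Φ Φ ℝ) (w : Φ → ℝ)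
    (hw : Matrix.vecMul w A = 0) : Matrix.vecMul w (matExp A) = w := by
  have hpow : ∀ n : ℕ, Matrix.vecMul w (A ^ n) = if n = 0 then w else 0 := by
    intro n
    induction n with
    | zero => simp [Matrix.vecMul_one]
    | succ n ih =>
      rw [pow_succ, ← Matrix.vecMul_vecMul, ih]
      rcases Nat.eq_zero_or_pos n with h | h
      · simp [h, hw]
      · rw [if_neg (by omega : ¬ n = 0), if_neg (by omega : ¬ n + 1 = 0), Matrix.zero_vecMul]
  have hsum : Summable (fun n : ℕ => ((n.factorial : ℝ))⁻¹ • A ^ n) :=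
    NormedSpace.expSeries_summable' (𝕂 := ℝ) A
  let L : Matrix Φ Φ ℝ →ₗ[ℝ] (Φ → ℝ) :=
    { toFun := fun B => Matrix.vecMul w B
      map_add' := fun B C => by
        funext j; simp [Matrix.vecMul, dotProduct, Matrix.add_apply, mul_add,
          Finset.sum_add_distrib]
      map_smul' := fun r B => by
        funext j; simp [Matrix.vecMul, dotProduct, Finset.mul_sum, mul_left_comm] }
  have hL : Continuous L := L.continuous_of_finiteDimensional
  have key : L (∑' n : ℕ, ((n.factorial : ℝ))⁻¹ • A ^ n)
      = ∑' n : ℕ, ((n.factorial : ℝ))⁻¹ • (Matrix.vecMul w (A ^ n)) := by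
    rw [← (hsum.hasSum.map L hL).tsum_eq]
    refine tsum_congr fun n => ?_
    simp [Function.comp, map_smul, L]
  have hLdef : L (∑' n : ℕ, ((n.factorial : ℝ))⁻¹ • A ^ n) = Matrix.vecMul w (matExp A) := by
    rw [matExp, NormedSpace.exp_eq_tsum ℝ]; rfl
  rw [← hLdef, key, tsum_eq_single 0]
  · simp
  · intro n hn; rw [hpow]; simp [hn]

variable (Q : Matrix Φ Φ ℝ) (π ν : Φ → ℝ)

lemma mulVec_one_eval (hQrow : ∀ i, ∑ j : Φ, Q i j = 0) (t : ℝ) (i : Φ) :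
    ((matExp (t • Q)).mulVec (fun _ => (1:ℝ))) i = 1 := by
  have h0 : (t • Q).mulVec (fun _ => (1:ℝ)) = (0:ℝ) • (fun _ => (1:ℝ)) := by
    funext i'
    simp only [Matrix.mulVec, dotProduct, Matrix.smul_apply, smul_eq_mul, mul_one,
      Pi.smul_apply, zero_mul]
    rw [← Finset.mul_sum, hQrow, mul_zero]
  rw [matExp_mulVec_eigen _ _ 0 h0]
  simp

lemma mulVec_nu_eval (hν : Q.mulVec ν = -ν) (t : ℝ) (i : Φ) :
    ((matExp (t • Q)).mulVec ν) i = Real.exp (-t) * ν i := by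
  have h0 : (t • Q).mulVec ν = (-t) • ν := by
    rw [Matrix.smul_mulVec, hν, smul_neg, ← neg_smul]
  rw [matExp_mulVec_eigen _ _ (-t) h0]
  simp

lemma stat_eval (hQrow : ∀ i, ∑ j : Φ, Q i j = 0)
    (hrev : ∀ i j, π i * Q i j = π j * Q j i) (t : ℝ) (j : Φ) :
    ∑ i : Φ, π i * (matExp (t • Q)) i j = π j := by
  have h0 : Matrix.vecMul π (t • Q) = 0 := by
    funext j'
    simp only [Matrix.vecMul, dotProduct, Matrix.smul_apply, smul_eq_mul, Pi.zero_apply]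
    have e1 : ∑ i : Φ, π i * (t * Q i j') = t * ∑ i : Φ, π i * Q i j' := by
      rw [Finset.mul_sum]; exact Finset.sum_congr rfl fun i _ => by ring
    rw [e1]
    have e2 : ∑ i : Φ, π i * Q i j' = ∑ i : Φ, π j' * Q j' i :=
      Finset.sum_congr rfl fun i _ => hrev i j'
    rw [e2, ← Finset.mul_sum, hQrow, mul_zero, mul_zero]
  have hst := matExp_vecMul_stat (t • Q) π h0
  have := congrFun hst j
  simpa [Matrix.vecMul, dotProduct] using this

end MatExpFacts

section Tree

variable {Φ : Type*} [Fintype Φ] [DecidableEq Φ]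

/-- Partial GTR weight: only edges down to level `d` are included. -/
noncomputable def gtrAux (h : ℕ) (π : Φ → ℝ) (Q : Matrix Φ Φ ℝ) (τ : ℕ → ℝ) (d : ℕ)
    (x : Fin (2 ^ (h + 1) - 1) → Φ) : ℝ :=
  π (x (idx h 1)) *
    ∏ v ∈ Finset.Ico 2 (2 ^ (d + 1)),
      (matExp (τ v • Q)) (x (idx h (v / 2))) (x (idx h v))

lemma gtrP_eq_gtrAux (h : ℕ) (π : Φ → ℝ) (Q : Matrix Φ Φ ℝ) (τ : ℕ → ℝ) :
    gtrP h π Q τ = gtrAux h π Q τ h := rfl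

lemma gtrAux_update (h : ℕ) (π : Φ → ℝ) (Q : Matrix Φ Φ ℝ) (τ : ℕ → ℝ) (d : ℕ)
    (ℓ : ℕ) (hl1 : 2^(d+1) ≤ ℓ) (hl2 : ℓ < 2^(h+1)) (x : Fin (2^(h+1)-1) → Φ) (j : Φ) :
    gtrAux h π Q τ d (Function.update x (idx h ℓ) j) = gtrAux h π Q τ d x := by
  have h2d : (2:ℕ) ≤ 2^(d+1) := by
    have : (2:ℕ)^1 ≤ 2^(d+1) := Nat.pow_le_pow_right (by norm_num) (by omega)
    omega
  unfold gtrAux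
  congr 1
  · congr 1
    exact Function.update_of_ne (idx_ne h (by omega) (by omega) (by omega) hl2 (by omega)) _ _
  · refine Finset.prod_congr rfl fun v hv => ?_
    rw [Finset.mem_Ico] at hv
    have hv2 : v < 2^(h+1) := by omega
    have hvd2 : v / 2 < 2^(h+1) := by omega
    rw [Function.update_of_ne (idx_ne h (by omega) hvd2 (by omega) hl2 (by omega)),
      Function.update_of_ne (idx_ne h (by omega) hv2 (by omega) hl2 (by omega))]

variable [Nonempty Φ]

lemma collapseOne {ι : Type*} [Fintype ι] [DecidableEq ι]
    (k : ι) (F : (ι → Φ) → Φ → ℝ)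
    (hF : ∀ x j y, F (Function.update x k j) y = F x y) :
    ∑ x : ι → Φ, F x (x k)
      = (Fintype.card Φ : ℝ)⁻¹ * ∑ x : ι → Φ, ∑ j, F x j := by
  classical
  set e := Equiv.funSplitAt k Φ with he
  have hsymm : ∀ (j : Φ) (y : {l // l ≠ k} → Φ) (l : ι),
      e.symm (j, y) l = if h : l = k then j else y ⟨l, h⟩ := by
    intro j y l
    simp [he, Equiv.funSplitAt, Equiv.piSplitAt]
  have hupd : ∀ (j j' : Φ) (y : {l // l ≠ k} → Φ),
      e.symm (j, y) = Function.update (e.symm (j', y)) k j := by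
    intro j j' y
    funext l
    rcases eq_or_ne l k with rfl | hl
    · simp [hsymm]
    · simp [hsymm, hl, Function.update_of_ne hl]
  have hinv : ∀ (j j' : Φ) (y : {l // l ≠ k} → Φ) (z : Φ),
      F (e.symm (j, y)) z = F (e.symm (j', y)) z := by
    intro j j' y z
    rw [hupd j j' y, hF]
  have hk : ∀ (j : Φ) (y : {l // l ≠ k} → Φ), e.symm (j, y) k = j := by
    intro j y; simp [hsymm]
  have lhs_eq : ∑ x : ι → Φ, F x (x k)
      = ∑ j : Φ, ∑ y : {l // l ≠ k} → Φ, F (e.symm (j, y)) j := by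
    rw [← Equiv.sum_comp e.symm (fun x => F x (x k)), Fintype.sum_prod_type]
    exact Finset.sum_congr rfl fun j _ => Finset.sum_congr rfl fun y _ => by rw [hk]
  have rhs_eq : ∑ x : ι → Φ, ∑ j, F x j
      = (Fintype.card Φ : ℝ) * ∑ j : Φ, ∑ y : {l // l ≠ k} → Φ, F (e.symm (j, y)) j := by
    rw [← Equiv.sum_comp e.symm (fun x => ∑ j, F x j), Fintype.sum_prod_type]
    have key : ∀ j₀ : Φ, ∑ y : {l // l ≠ k} → Φ, ∑ j, F (e.symm (j₀, y)) j
        = ∑ j : Φ, ∑ y : {l // l ≠ k} → Φ, F (e.symm (j, y)) j := by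
      intro j₀
      rw [Finset.sum_comm]
      exact Finset.sum_congr rfl fun j _ => Finset.sum_congr rfl fun y _ => hinv j₀ j y j
    calc ∑ j₀ : Φ, ∑ y : {l // l ≠ k} → Φ, ∑ j, F (e.symm (j₀, y)) j
        = ∑ _j₀ : Φ, ∑ j : Φ, ∑ y : {l // l ≠ k} → Φ, F (e.symm (j, y)) j :=
          Finset.sum_congr rfl fun j₀ _ => key j₀
      _ = (Fintype.card Φ : ℝ) * ∑ j : Φ, ∑ y : {l // l ≠ k} → Φ, F (e.symm (j, y)) j := by
          rw [Finset.sum_const, nsmul_eq_mul, Fintype.card]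
  rw [lhs_eq, rhs_eq, ← mul_assoc, inv_mul_cancel₀, one_mul]
  exact Nat.cast_ne_zero.mpr Fintype.card_ne_zero

lemma collapseMany (h d : ℕ) (hdh : d + 1 ≤ h) (u : ℕ → Φ → Φ → ℝ)
    (s : Finset ℕ) :
    s ⊆ Finset.Ico (2^(d+1)) (2^(d+2)) →
    ∀ g : (Fin (2^(h+1)-1) → Φ) → ℝ,
    (∀ ℓ ∈ s, ∀ x j, g (Function.update x (idx h ℓ) j) = g x) →
    ∑ x : Fin (2^(h+1)-1) → Φ, g x * ∏ ℓ ∈ s, u ℓ (x (idx h (ℓ/2))) (x (idx h ℓ))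
      = ∑ x : Fin (2^(h+1)-1) → Φ,
          g x * ∏ ℓ ∈ s, ((Fintype.card Φ : ℝ)⁻¹ * ∑ j, u ℓ (x (idx h (ℓ/2))) j) := by
  classical
  induction s using Finset.induction_on with
  | empty => intro _ g _; rfl
  | @insert ℓ s hℓs ih =>
    intro hsub g hg
    have hℓmem := hsub (Finset.mem_insert_self ℓ s)
    rw [Finset.mem_Ico] at hℓmem
    have hpow1 : (2:ℕ)^(d+2) ≤ 2^(h+1) := Nat.pow_le_pow_right (by norm_num) (by omega)
    have hpow2 : (2:ℕ)^d ≤ 2^(d+1) := Nat.pow_le_pow_right (by norm_num) (by omega)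
    have hpow3 : (1:ℕ) ≤ 2^d := Nat.one_le_two_pow
    have hlhalf : 2^d ≤ ℓ/2 ∧ ℓ/2 < 2^(d+1) := by
      constructor
      · rw [Nat.le_div_iff_mul_le (by norm_num)]
        calc 2^d * 2 = 2^(d+1) := by ring
          _ ≤ ℓ := hℓmem.1
      · rw [Nat.div_lt_iff_lt_mul (by norm_num)]
        calc ℓ < 2^(d+2) := hℓmem.2
          _ = 2^(d+1) * 2 := by ring
    have hmem' : ∀ ℓ' ∈ s, 2^(d+1) ≤ ℓ' ∧ ℓ' < 2^(d+2) := by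
      intro ℓ' hl'
      have := hsub (Finset.mem_insert_of_mem hl')
      rw [Finset.mem_Ico] at this; exact this
    have hne_half : ∀ ℓ' ∈ s, idx h (ℓ/2) ≠ idx h ℓ' := by
      intro ℓ' hl'
      obtain ⟨h1, h2⟩ := hmem' ℓ' hl'
      exact idx_ne h (by omega) (by omega) (by omega) (by omega) (by omega)
    have hne_l : ∀ ℓ' ∈ s, idx h ℓ ≠ idx h ℓ' := by
      intro ℓ' hl'
      obtain ⟨h1, h2⟩ := hmem' ℓ' hl'
      exact idx_ne h (by omega) (by omega) (by omega) (by omega)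
        (fun hc => hℓs (hc ▸ hl'))
    have hne_lhalf_l : idx h (ℓ/2) ≠ idx h ℓ :=
      idx_ne h (by omega) (by omega) (by omega) (by omega) (by omega)
    set g₁ : (Fin (2^(h+1)-1) → Φ) → ℝ :=
      fun x => g x * u ℓ (x (idx h (ℓ/2))) (x (idx h ℓ)) with hg₁def
    have hg₁ : ∀ ℓ' ∈ s, ∀ x j, g₁ (Function.update x (idx h ℓ') j) = g₁ x := by
      intro ℓ' hl' x j
      simp only [hg₁def]
      rw [hg ℓ' (Finset.mem_insert_of_mem hl'),
        Function.update_of_ne (hne_half ℓ' hl'),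
        Function.update_of_ne (hne_l ℓ' hl')]
    have step1 := ih (fun a ha => hsub (Finset.mem_insert_of_mem ha)) g₁ hg₁
    set G : (Fin (2^(h+1)-1) → Φ) → ℝ :=
      fun x => g x * ∏ ℓ' ∈ s, ((Fintype.card Φ : ℝ)⁻¹ * ∑ j, u ℓ' (x (idx h (ℓ'/2))) j)
      with hGdef
    have hGupd : ∀ x j, G (Function.update x (idx h ℓ) j) = G x := by
      intro x j
      simp only [hGdef]
      rw [hg ℓ (Finset.mem_insert_self _ _)]
      congr 1
      refine Finset.prod_congr rfl fun ℓ' hl' => ?_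
      obtain ⟨h1, h2⟩ := hmem' ℓ' hl'
      have hhalf' : 2^d ≤ ℓ'/2 ∧ ℓ'/2 < 2^(d+1) := by
        constructor
        · rw [Nat.le_div_iff_mul_le (by norm_num)]
          calc 2^d * 2 = 2^(d+1) := by ring
            _ ≤ ℓ' := h1
        · rw [Nat.div_lt_iff_lt_mul (by norm_num)]
          calc ℓ' < 2^(d+2) := h2
            _ = 2^(d+1) * 2 := by ring
      have hne : idx h (ℓ'/2) ≠ idx h ℓ :=
        idx_ne h (by omega) (by omega) (by omega) (by omega) (by omega)
      rw [Function.update_of_ne hne]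
    have hF : ∀ x j y,
        (fun x y => G x * u ℓ (x (idx h (ℓ/2))) y) (Function.update x (idx h ℓ) j) y
          = (fun x y => G x * u ℓ (x (idx h (ℓ/2))) y) x y := by
      intro x j y
      simp only []
      rw [hGupd, Function.update_of_ne hne_lhalf_l]
    have step2 := collapseOne (idx h ℓ) (fun x y => G x * u ℓ (x (idx h (ℓ/2))) y) hF
    calc ∑ x : Fin (2^(h+1)-1) → Φ,
          g x * ∏ ℓ' ∈ insert ℓ s, u ℓ' (x (idx h (ℓ'/2))) (x (idx h ℓ'))
        = ∑ x : Fin (2^(h+1)-1) → Φ,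
            g₁ x * ∏ ℓ' ∈ s, u ℓ' (x (idx h (ℓ'/2))) (x (idx h ℓ')) := by
          refine Finset.sum_congr rfl fun x _ => ?_
          rw [Finset.prod_insert hℓs, hg₁def]; ring
      _ = ∑ x : Fin (2^(h+1)-1) → Φ,
            g₁ x * ∏ ℓ' ∈ s, ((Fintype.card Φ : ℝ)⁻¹ * ∑ j, u ℓ' (x (idx h (ℓ'/2))) j) := step1
      _ = ∑ x : Fin (2^(h+1)-1) → Φ, G x * u ℓ (x (idx h (ℓ/2))) (x (idx h ℓ)) := by
          refine Finset.sum_congr rfl fun x _ => ?_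
          rw [hg₁def, hGdef]; ring
      _ = (Fintype.card Φ : ℝ)⁻¹ *
            ∑ x : Fin (2^(h+1)-1) → Φ, ∑ j, G x * u ℓ (x (idx h (ℓ/2))) j := step2
      _ = ∑ x : Fin (2^(h+1)-1) → Φ,
            g x * ∏ ℓ' ∈ insert ℓ s, ((Fintype.card Φ : ℝ)⁻¹ * ∑ j, u ℓ' (x (idx h (ℓ'/2))) j) := by
          rw [Finset.mul_sum]
          refine Finset.sum_congr rfl fun x _ => ?_
          rw [← Finset.mul_sum, Finset.prod_insert hℓs, hGdef]; ring

end Tree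

section Peel

variable {Φ : Type*} [Fintype Φ] [DecidableEq Φ] [Nonempty Φ]
variable (π ν : Φ → ℝ) (Q : Matrix Φ Φ ℝ)

lemma peel (h d : ℕ) (hdh : d + 1 ≤ h) (τ : ℕ → ℝ) (w : ℕ → Φ → ℝ) :
    ∑ x : Fin (2^(h+1)-1) → Φ, gtrAux h π Q τ (d+1) x *
        ∏ ℓ ∈ Finset.Ico (2^(d+1)) (2^(d+2)), w ℓ (x (idx h ℓ))
      = ((Fintype.card Φ : ℝ)⁻¹)^(2^(d+1)) *
        ∑ x : Fin (2^(h+1)-1) → Φ, gtrAux h π Q τ d x *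
          ∏ ℓ ∈ Finset.Ico (2^(d+1)) (2^(d+2)),
            ((matExp (τ ℓ • Q)).mulVec (w ℓ)) (x (idx h (ℓ/2))) := by
  classical
  have h2d : (2:ℕ) ≤ 2^(d+1) := by
    have : (2:ℕ)^1 ≤ 2^(d+1) := Nat.pow_le_pow_right (by norm_num) (by omega)
    omega
  have hdd : (2:ℕ)^(d+1) ≤ 2^(d+2) := Nat.pow_le_pow_right (by norm_num) (by omega)
  have hpow1 : (2:ℕ)^(d+2) ≤ 2^(h+1) := Nat.pow_le_pow_right (by norm_num) (by omega)
  have hsplit : ∀ x : Fin (2^(h+1)-1) → Φ, gtrAux h π Q τ (d+1) x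
      = gtrAux h π Q τ d x *
        ∏ ℓ ∈ Finset.Ico (2^(d+1)) (2^(d+2)),
          (matExp (τ ℓ • Q)) (x (idx h (ℓ/2))) (x (idx h ℓ)) := by
    intro x
    unfold gtrAux
    rw [mul_assoc]
    congr 1
    exact (Finset.prod_Ico_consecutive _ h2d hdd).symm
  have step0 : ∑ x : Fin (2^(h+1)-1) → Φ, gtrAux h π Q τ (d+1) x *
        ∏ ℓ ∈ Finset.Ico (2^(d+1)) (2^(d+2)), w ℓ (x (idx h ℓ))
      = ∑ x : Fin (2^(h+1)-1) → Φ, gtrAux h π Q τ d x *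
        ∏ ℓ ∈ Finset.Ico (2^(d+1)) (2^(d+2)),
          (fun ℓ i j => (matExp (τ ℓ • Q)) i j * w ℓ j) ℓ (x (idx h (ℓ/2))) (x (idx h ℓ)) := by
    refine Finset.sum_congr rfl fun x _ => ?_
    rw [hsplit x, mul_assoc, ← Finset.prod_mul_distrib]
  rw [step0, collapseMany h d hdh (fun ℓ i j => matExp (τ ℓ • Q) i j * w ℓ j)
    (Finset.Ico (2^(d+1)) (2^(d+2))) Finset.Subset.rfl (gtrAux h π Q τ d)
    (fun ℓ hℓ x j => by
      rw [Finset.mem_Ico] at hℓ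
      exact gtrAux_update h π Q τ d ℓ hℓ.1 (by omega) x j)]
  rw [Finset.mul_sum]
  refine Finset.sum_congr rfl fun x _ => ?_
  have hprod : ∏ ℓ ∈ Finset.Ico (2^(d+1)) (2^(d+2)),
      ((Fintype.card Φ : ℝ)⁻¹ * ∑ j, (matExp (τ ℓ • Q)) (x (idx h (ℓ/2))) j * w ℓ j)
    = ((Fintype.card Φ : ℝ)⁻¹)^(2^(d+1)) *
      ∏ ℓ ∈ Finset.Ico (2^(d+1)) (2^(d+2)),
        ((matExp (τ ℓ • Q)).mulVec (w ℓ)) (x (idx h (ℓ/2))) := by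
    rw [Finset.prod_mul_distrib, Finset.prod_const, Nat.card_Ico]
    have hcard2 : (2:ℕ)^(d+2) - 2^(d+1) = 2^(d+1) := by
      have : (2:ℕ)^(d+2) = 2^(d+1) * 2 := by ring
      omega
    rw [hcard2]
    refine congrArg _ (Finset.prod_congr rfl fun ℓ _ => ?_)
    simp [Matrix.mulVec, dotProduct]
  rw [hprod]; ring

end Peel

section Induction

variable {Φ : Type*} [Fintype Φ] [DecidableEq Φ] [Nonempty Φ]
variable (π ν : Φ → ℝ) (Q : Matrix Φ Φ ℝ)

lemma constants_merge (hφ : (Fintype.card Φ : ℝ) ≠ 0) {h d : ℕ} (hdh : d + 1 ≤ h) :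
    ((Fintype.card Φ : ℝ)⁻¹)^(2^(d+1)) * (Fintype.card Φ : ℝ)^(2^(h+1) - 2^(d+1))
      = (Fintype.card Φ : ℝ)^(2^(h+1) - 2^(d+2)) := by
  have h2 : (2:ℕ)^(d+2) = 2 * 2^(d+1) := by ring
  have h3 : (2:ℕ)^(d+2) ≤ 2^(h+1) := Nat.pow_le_pow_right (by norm_num) (by omega)
  have hsplit : 2^(h+1) - 2^(d+1) = (2^(h+1) - 2^(d+2)) + 2^(d+1) := by omega
  rw [hsplit, pow_add ((Fintype.card Φ : ℝ)) (2^(h+1) - 2^(d+2)) (2^(d+1)),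
    inv_pow ((Fintype.card Φ : ℝ)) (2^(d+1))]
  calc ((Fintype.card Φ : ℝ)^(2^(d+1)))⁻¹ *
        ((Fintype.card Φ : ℝ)^(2^(h+1) - 2^(d+2)) * (Fintype.card Φ : ℝ)^(2^(d+1)))
      = (Fintype.card Φ : ℝ)^(2^(h+1) - 2^(d+2)) *
        ((Fintype.card Φ : ℝ)^(2^(d+1)) * ((Fintype.card Φ : ℝ)^(2^(d+1)))⁻¹) := by ring
    _ = (Fintype.card Φ : ℝ)^(2^(h+1) - 2^(d+2)) := by
        rw [mul_inv_cancel₀ (pow_ne_zero _ hφ), mul_one]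

lemma L2 (hQrow : ∀ i, ∑ j : Φ, Q i j = 0)
    (hrev : ∀ i j, π i * Q i j = π j * Q j i) (h : ℕ) (τ : ℕ → ℝ) :
    ∀ d, d ≤ h → ∀ p, 2^d ≤ p → p < 2^(d+1) → ∀ f : Φ → ℝ,
    ∑ x : Fin (2^(h+1)-1) → Φ, gtrAux h π Q τ d x * f (x (idx h p))
      = (Fintype.card Φ : ℝ)^(2^(h+1) - 2^(d+1)) * ∑ i, π i * f i := by
  have hφ : (Fintype.card Φ : ℝ) ≠ 0 := Nat.cast_ne_zero.mpr Fintype.card_ne_zero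
  intro d
  induction d with
  | zero =>
    intro _ p hp1 hp2 f
    have hp : p = 1 := by omega
    subst hp
    have hzero : ∀ x : Fin (2^(h+1)-1) → Φ, gtrAux h π Q τ 0 x = π (x (idx h 1)) := by
      intro x; unfold gtrAux; norm_num
    have e1 : ∑ x : Fin (2^(h+1)-1) → Φ, gtrAux h π Q τ 0 x * f (x (idx h 1))
        = ∑ x : Fin (2^(h+1)-1) → Φ,
            (fun (_ : Fin (2^(h+1)-1) → Φ) (j : Φ) => π j * f j) x (x (idx h 1)) := by
      refine Finset.sum_congr rfl fun x _ => ?_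
      rw [hzero x]
    rw [e1, collapseOne (idx h 1) (fun _ j => π j * f j) (fun x j y => rfl)]
    rw [Finset.sum_const, Finset.card_univ]
    have hcf : Fintype.card (Fin (2^(h+1)-1) → Φ)
        = Fintype.card Φ ^ (2^(h+1)-1) := by
      rw [Fintype.card_fun, Fintype.card_fin]
    rw [hcf, nsmul_eq_mul]
    push_cast
    have h2 : (2:ℕ) ≤ 2^(h+1) := by
      have : (2:ℕ)^1 ≤ 2^(h+1) := Nat.pow_le_pow_right (by norm_num) (by omega)
      omega
    have hexp : 2^(h+1) - 1 = (2^(h+1) - 2^(0+1)) + 1 := by omega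
    rw [hexp, pow_succ]
    calc (Fintype.card Φ : ℝ)⁻¹ *
          ((Fintype.card Φ : ℝ)^(2^(h+1) - 2^(0+1)) * (Fintype.card Φ : ℝ) * ∑ j, π j * f j)
        = ((Fintype.card Φ : ℝ)⁻¹ * (Fintype.card Φ : ℝ)) *
          ((Fintype.card Φ : ℝ)^(2^(h+1) - 2^(0+1)) * ∑ j, π j * f j) := by ring
      _ = (Fintype.card Φ : ℝ)^(2^(h+1) - 2^(0+1)) * ∑ i, π i * f i := by
          rw [inv_mul_cancel₀ hφ, one_mul]
  | succ d ih =>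
    intro hdh p hp1 hp2 f
    have hp12 : 1 ≤ p := le_trans Nat.one_le_two_pow hp1
    have hmem : p ∈ Finset.Ico (2^(d+1)) (2^(d+2)) := Finset.mem_Ico.mpr ⟨hp1, hp2⟩
    set w : ℕ → Φ → ℝ := fun ℓ => if ℓ = p then f else fun _ => (1:ℝ) with hw
    have e1 : ∑ x : Fin (2^(h+1)-1) → Φ, gtrAux h π Q τ (d+1) x * f (x (idx h p))
        = ∑ x : Fin (2^(h+1)-1) → Φ, gtrAux h π Q τ (d+1) x *
            ∏ ℓ ∈ Finset.Ico (2^(d+1)) (2^(d+2)), w ℓ (x (idx h ℓ)) := by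
      refine Finset.sum_congr rfl fun x _ => ?_
      congr 1
      rw [Finset.prod_eq_single p (fun b _ hb => by simp [hw, hb]) (fun hc => absurd hmem hc)]
      simp [hw]
    rw [e1, peel π Q h d hdh τ w]
    have e2 : ∀ x : Fin (2^(h+1)-1) → Φ,
        ∏ ℓ ∈ Finset.Ico (2^(d+1)) (2^(d+2)),
          ((matExp (τ ℓ • Q)).mulVec (w ℓ)) (x (idx h (ℓ/2)))
        = ((matExp (τ p • Q)).mulVec f) (x (idx h (p/2))) := by
      intro x
      rw [Finset.prod_eq_single p (fun b _ hb => by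
          simp only [hw, if_neg hb]
          exact mulVec_one_eval Q hQrow (τ b) _)
        (fun hc => absurd hmem hc)]
      simp [hw]
    have e3 : ∑ x : Fin (2^(h+1)-1) → Φ, gtrAux h π Q τ d x *
        ∏ ℓ ∈ Finset.Ico (2^(d+1)) (2^(d+2)),
          ((matExp (τ ℓ • Q)).mulVec (w ℓ)) (x (idx h (ℓ/2)))
        = (Fintype.card Φ : ℝ)^(2^(h+1) - 2^(d+1)) *
            ∑ i, π i * ((matExp (τ p • Q)).mulVec f) i := by
      have hhalf1 : 2^d ≤ p/2 := by
        rw [Nat.le_div_iff_mul_le (by norm_num)]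
        calc 2^d * 2 = 2^(d+1) := by ring
          _ ≤ p := hp1
      have hhalf2 : p/2 < 2^(d+1) := by
        rw [Nat.div_lt_iff_lt_mul (by norm_num)]
        calc p < 2^(d+2) := hp2
          _ = 2^(d+1) * 2 := by ring
      rw [Finset.sum_congr rfl fun x _ => by rw [e2 x]]
      exact ih (by omega) (p/2) hhalf1 hhalf2 _
    rw [e3]
    have e4 : ∑ i, π i * ((matExp (τ p • Q)).mulVec f) i = ∑ i, π i * f i := by
      calc ∑ i, π i * ((matExp (τ p • Q)).mulVec f) i
          = ∑ i, ∑ j, π i * ((matExp (τ p • Q)) i j * f j) := by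
            refine Finset.sum_congr rfl fun i _ => ?_
            simp only [Matrix.mulVec, dotProduct, Finset.mul_sum]
        _ = ∑ j, (∑ i, π i * (matExp (τ p • Q)) i j) * f j := by
            rw [Finset.sum_comm]
            refine Finset.sum_congr rfl fun j _ => ?_
            rw [Finset.sum_mul]
            exact Finset.sum_congr rfl fun i _ => by ring
        _ = ∑ j, π j * f j := by
            refine Finset.sum_congr rfl fun j _ => ?_
            rw [stat_eval Q π hQrow hrev (τ p) j]
    rw [e4, ← mul_assoc, constants_merge hφ hdh]

end Induction

section L1sec

variable {Φ : Type*} [Fintype Φ] [DecidableEq Φ] [Nonempty Φ]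
variable (π ν : Φ → ℝ) (Q : Matrix Φ Φ ℝ)

lemma L1 (hQrow : ∀ i, ∑ j : Φ, Q i j = 0)
    (hrev : ∀ i j, π i * Q i j = π j * Q j i)
    (hν : Q.mulVec ν = -ν)
    (hnorm : ∑ i : Φ, π i * ν i ^ 2 = 1)
    (h : ℕ) (τ : ℕ → ℝ) :
    ∀ d, d ≤ h → ∀ p q, 2^d ≤ p → p < 2^(d+1) → 2^d ≤ q → q < 2^(d+1) → p ≠ q →
    ∑ x : Fin (2^(h+1)-1) → Φ, gtrAux h π Q τ d x * (ν (x (idx h p)) * ν (x (idx h q)))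
      = (Fintype.card Φ : ℝ)^(2^(h+1) - 2^(d+1)) *
          Real.exp (-(pathSum τ (lca p q) p + pathSum τ (lca p q) q)) := by
  have hφ : (Fintype.card Φ : ℝ) ≠ 0 := Nat.cast_ne_zero.mpr Fintype.card_ne_zero
  intro d
  induction d with
  | zero =>
    intro _ p q hp1 hp2 hq1 hq2 hpq
    exact absurd (by omega : p = q) hpq
  | succ d ih =>
    intro hdh p q hp1 hp2 hq1 hq2 hpq
    have h2d : (2:ℕ) ≤ 2^(d+1) := by
      have : (2:ℕ)^1 ≤ 2^(d+1) := Nat.pow_le_pow_right (by norm_num) (by omega)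
      simpa using this
    have hp12 : 2 ≤ p := le_trans h2d hp1
    have hq12 : 2 ≤ q := le_trans h2d hq1
    have hp2' : p < 2^(d+2) := hp2
    have hq2' : q < 2^(d+2) := hq2
    have hmemp : p ∈ Finset.Ico (2^(d+1)) (2^(d+2)) := Finset.mem_Ico.mpr ⟨hp1, hp2'⟩
    have hmemq : q ∈ Finset.Ico (2^(d+1)) (2^(d+2)) := Finset.mem_Ico.mpr ⟨hq1, hq2'⟩
    have hhalfp1 : 2^d ≤ p/2 := by
      rw [Nat.le_div_iff_mul_le (by norm_num)]
      calc 2^d * 2 = 2^(d+1) := by ring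
        _ ≤ p := hp1
    have hhalfp2 : p/2 < 2^(d+1) := by
      rw [Nat.div_lt_iff_lt_mul (by norm_num)]
      calc p < 2^(d+2) := hp2'
        _ = 2^(d+1) * 2 := by ring
    have hhalfq1 : 2^d ≤ q/2 := by
      rw [Nat.le_div_iff_mul_le (by norm_num)]
      calc 2^d * 2 = 2^(d+1) := by ring
        _ ≤ q := hq1
    have hhalfq2 : q/2 < 2^(d+1) := by
      rw [Nat.div_lt_iff_lt_mul (by norm_num)]
      calc q < 2^(d+2) := hq2'
        _ = 2^(d+1) * 2 := by ring
    classical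
    set w : ℕ → Φ → ℝ :=
      fun ℓ => if ℓ = p then ν else if ℓ = q then ν else fun _ => (1:ℝ) with hw
    have hwp : w p = ν := by simp [hw]
    have hwq : w q = ν := by simp [hw, Ne.symm hpq]
    have hwother : ∀ z, z ≠ p → z ≠ q → w z = fun _ => (1:ℝ) := by
      intro z h1 h2; simp [hw, h1, h2]
    have hsub2 : ({p, q} : Finset ℕ) ⊆ Finset.Ico (2^(d+1)) (2^(d+2)) := by
      intro z hz
      rcases Finset.mem_insert.mp hz with rfl | hz'
      · exact hmemp
      · rw [Finset.mem_singleton] at hz'; subst hz'; exact hmemq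
    have e1 : ∀ x : Fin (2^(h+1)-1) → Φ,
        ∏ ℓ ∈ Finset.Ico (2^(d+1)) (2^(d+2)), w ℓ (x (idx h ℓ))
          = ν (x (idx h p)) * ν (x (idx h q)) := by
      intro x
      rw [← Finset.prod_subset hsub2 (fun z hmem hnot => by
        have h1 : z ≠ p := fun hc => hnot (by simp [hc])
        have h2 : z ≠ q := fun hc => hnot (by simp [hc])
        rw [hwother z h1 h2])]
      rw [Finset.prod_pair hpq, hwp, hwq]
    have e2 : ∀ x : Fin (2^(h+1)-1) → Φ,
        ∏ ℓ ∈ Finset.Ico (2^(d+1)) (2^(d+2)),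
          ((matExp (τ ℓ • Q)).mulVec (w ℓ)) (x (idx h (ℓ/2)))
          = (Real.exp (-(τ p)) * ν (x (idx h (p/2)))) *
            (Real.exp (-(τ q)) * ν (x (idx h (q/2)))) := by
      intro x
      rw [← Finset.prod_subset hsub2 (fun z hmem hnot => by
        have h1 : z ≠ p := fun hc => hnot (by simp [hc])
        have h2 : z ≠ q := fun hc => hnot (by simp [hc])
        rw [hwother z h1 h2]
        exact mulVec_one_eval Q hQrow (τ z) _)]
      rw [Finset.prod_pair hpq, hwp, hwq,
        mulVec_nu_eval Q ν hν (τ p) _, mulVec_nu_eval Q ν hν (τ q) _]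
    have estep : ∑ x : Fin (2^(h+1)-1) → Φ, gtrAux h π Q τ (d+1) x *
        (ν (x (idx h p)) * ν (x (idx h q)))
        = ((Fintype.card Φ : ℝ)⁻¹)^(2^(d+1)) * ((Real.exp (-(τ p)) * Real.exp (-(τ q))) *
            ∑ x : Fin (2^(h+1)-1) → Φ, gtrAux h π Q τ d x *
              (ν (x (idx h (p/2))) * ν (x (idx h (q/2))))) := by
      rw [Finset.sum_congr rfl (fun x _ => by rw [← e1 x]), peel π Q h d hdh τ w]
      congr 1
      rw [Finset.sum_congr rfl (fun x _ => by rw [e2 x]), Finset.mul_sum]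
      exact Finset.sum_congr rfl fun x _ => by ring
    rw [estep]
    by_cases hc : p/2 = q/2
    · -- siblings
      have hlca : lca p q = p/2 := by
        rw [lca_ne' hpq, hc, lca_self', ← hc]
      have hinner : ∑ x : Fin (2^(h+1)-1) → Φ, gtrAux h π Q τ d x *
          (ν (x (idx h (p/2))) * ν (x (idx h (q/2))))
          = (Fintype.card Φ : ℝ)^(2^(h+1) - 2^(d+1)) := by
        have hb : ∑ x : Fin (2^(h+1)-1) → Φ, gtrAux h π Q τ d x *
            (ν (x (idx h (p/2))) * ν (x (idx h (q/2))))
            = ∑ x : Fin (2^(h+1)-1) → Φ, gtrAux h π Q τ d x *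
              (fun i => ν i * ν i) (x (idx h (p/2))) := by
          refine Finset.sum_congr rfl fun x _ => ?_
          rw [← hc]
        rw [hb, L2 π Q hQrow hrev h τ d (by omega) (p/2) hhalfp1 hhalfp2 (fun i => ν i * ν i)]
        have : ∑ i, π i * (ν i * ν i) = 1 := by
          rw [← hnorm]
          exact Finset.sum_congr rfl fun i _ => by rw [pow_two]
        rw [this, mul_one]
      rw [hinner]
      have hpsp : pathSum τ (lca p q) p = τ p := by
        rw [hlca, pathSum_gt' τ (Nat.div_lt_self (by omega) (by norm_num)),
          pathSum_le' τ le_rfl, add_zero]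
      have hpsq : pathSum τ (lca p q) q = τ q := by
        rw [hlca, hc, pathSum_gt' τ (Nat.div_lt_self (by omega) (by norm_num)),
          pathSum_le' τ le_rfl, add_zero]
      rw [hpsp, hpsq]
      calc ((Fintype.card Φ : ℝ)⁻¹)^(2^(d+1)) *
            ((Real.exp (-(τ p)) * Real.exp (-(τ q))) * (Fintype.card Φ : ℝ)^(2^(h+1) - 2^(d+1)))
          = (((Fintype.card Φ : ℝ)⁻¹)^(2^(d+1)) * (Fintype.card Φ : ℝ)^(2^(h+1) - 2^(d+1))) *
            (Real.exp (-(τ p)) * Real.exp (-(τ q))) := by ring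
        _ = (Fintype.card Φ : ℝ)^(2^(h+1) - 2^(d+1+1)) *
            Real.exp (-(τ p + τ q)) := by
            rw [constants_merge hφ hdh, ← Real.exp_add, neg_add]
    · -- not siblings
      have hd1 : 1 ≤ d := by
        by_contra hd0
        have : d = 0 := by omega
        subst this
        have : p / 2 = 1 := by omega
        have : q / 2 = 1 := by omega
        omega
      have hih := ih (by omega) (p/2) (q/2) hhalfp1 hhalfp2 hhalfq1 hhalfq2 hc
      rw [hih]
      have hlca : lca p q = lca (p/2) (q/2) := lca_ne' hpq
      have hlep : lca (p/2) (q/2) ≤ p/2 := (lca_le' _ _).1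
      have hleq : lca (p/2) (q/2) ≤ q/2 := (lca_le' _ _).2
      have hpsp : pathSum τ (lca p q) p = τ p + pathSum τ (lca (p/2) (q/2)) (p/2) := by
        rw [hlca, pathSum_gt' τ (lt_of_le_of_lt hlep (Nat.div_lt_self (by omega) (by norm_num)))]
      have hpsq : pathSum τ (lca p q) q = τ q + pathSum τ (lca (p/2) (q/2)) (q/2) := by
        rw [hlca, pathSum_gt' τ (lt_of_le_of_lt hleq (Nat.div_lt_self (by omega) (by norm_num)))]
      rw [hpsp, hpsq]
      calc ((Fintype.card Φ : ℝ)⁻¹)^(2^(d+1)) *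
            ((Real.exp (-(τ p)) * Real.exp (-(τ q))) *
              ((Fintype.card Φ : ℝ)^(2^(h+1) - 2^(d+1)) *
                Real.exp (-(pathSum τ (lca (p/2) (q/2)) (p/2) +
                  pathSum τ (lca (p/2) (q/2)) (q/2)))))
          = (((Fintype.card Φ : ℝ)⁻¹)^(2^(d+1)) * (Fintype.card Φ : ℝ)^(2^(h+1) - 2^(d+1))) *
            (Real.exp (-(τ p)) * Real.exp (-(τ q)) *
              Real.exp (-(pathSum τ (lca (p/2) (q/2)) (p/2) +
                pathSum τ (lca (p/2) (q/2)) (q/2)))) := by ring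
        _ = (Fintype.card Φ : ℝ)^(2^(h+1) - 2^(d+1+1)) *
            Real.exp (-(τ p + pathSum τ (lca (p/2) (q/2)) (p/2) +
              (τ q + pathSum τ (lca (p/2) (q/2)) (q/2)))) := by
            rw [constants_merge hφ hdh, ← Real.exp_add, ← Real.exp_add]
            congr 2
            ring

end L1sec

/-- (Large Deviations, expectation part: exponential averaging is unbiased.) For every
depth `h ≥ 1`, positive edge weights, and distinct same-level vertices `a, b` on level
`m` with `1 ≤ m ≤ h`: `E[S_a S_b] = e^{−τ(a,b)}`. -/
theorem exponential_averaging_unbiased {Φ : Type*} [Fintype Φ] [DecidableEq Φ]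
    (hcard : 2 ≤ Fintype.card Φ)
    (Q : Matrix Φ Φ ℝ) (π ν : Φ → ℝ)
    (hQoff : ∀ i j, i ≠ j → 0 < Q i j)
    (hQrow : ∀ i, ∑ j : Φ, Q i j = 0)
    (hπpos : ∀ i, 0 < π i)
    (hπsum : ∑ i : Φ, π i = 1)
    (hrev : ∀ i j, π i * Q i j = π j * Q j i)
    (hν : Q.mulVec ν = -ν)
    (hnorm : ∑ i : Φ, π i * ν i ^ 2 = 1) :
    ∀ h : ℕ, 1 ≤ h →
    ∀ τ : ℕ → ℝ, (∀ v, 2 ≤ v → v < 2 ^ (h + 1) → 0 < τ v) →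
    ∀ m : ℕ, 1 ≤ m → m ≤ h →
    ∀ a b : ℕ, 2 ^ m ≤ a → a < 2 ^ (m + 1) → 2 ^ m ≤ b → b < 2 ^ (m + 1) → a ≠ b →
      ∑ x : Fin (2 ^ (h + 1) - 1) → Φ,
          gtrP h π Q τ x * (estSAt h m ν τ a x * estSAt h m ν τ b x) =
        Real.exp (-(treeDist τ a b)) := by
  intro h hh τ _hτ m hm1 hmh a b ha1 ha2 hb1 hb2 hab
  haveI : Nonempty Φ := Fintype.card_pos_iff.mp (by omega)
  have ha0 : 1 ≤ a := le_trans Nat.one_le_two_pow ha1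
  have hb0 : 1 ≤ b := le_trans Nat.one_le_two_pow hb1
  have hbound : ∀ c c', 2^m ≤ c → c < 2^(m+1) → c * 2^(h-m) ≤ c' → c' < (c+1) * 2^(h-m) →
      2^h ≤ c' ∧ c' < 2^(h+1) := by
    intro c c' hc1 hc2 h1 h2
    constructor
    · calc 2^h = 2^m * 2^(h-m) := by rw [← pow_add]; congr 1; omega
        _ ≤ c * 2^(h-m) := Nat.mul_le_mul_right _ hc1
        _ ≤ c' := h1
    · calc c' < (c+1) * 2^(h-m) := h2
        _ ≤ 2^(m+1) * 2^(h-m) := Nat.mul_le_mul_right _ (by omega)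
        _ = 2^(h+1) := by rw [← pow_add]; congr 1; omega
  have h2K : ((2:ℝ)^(h-m)) ≠ 0 := pow_ne_zero _ two_ne_zero
  have pair : ∀ a' ∈ Finset.Ico (a * 2^(h-m)) ((a+1) * 2^(h-m)),
      ∀ b' ∈ Finset.Ico (b * 2^(h-m)) ((b+1) * 2^(h-m)),
      ∑ x : Fin (2^(h+1)-1) → Φ, gtrP h π Q τ x *
        (((2:ℝ)^(h-m))⁻¹ * ν (x (idx h a')) * Real.exp (pathSum τ a a') *
          (((2:ℝ)^(h-m))⁻¹ * ν (x (idx h b')) * Real.exp (pathSum τ b b')))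
      = ((2:ℝ)^(h-m))⁻¹ * ((2:ℝ)^(h-m))⁻¹ * Real.exp (-(treeDist τ a b)) := by
    intro a' ha' b' hb'
    rw [Finset.mem_Ico] at ha' hb'
    obtain ⟨h1, h2⟩ := ha'
    obtain ⟨h3, h4⟩ := hb'
    have hA := hbound a a' ha1 ha2 h1 h2
    have hB := hbound b b' hb1 hb2 h3 h4
    have ha'b : a' ≠ b' := by
      intro he
      exact hab (by rw [← div_pow_interval h1 h2, he, div_pow_interval h3 h4])
    have hL1 := L1 π ν Q hQrow hrev hν hnorm h τ h (le_refl h) a' b'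
      hA.1 hA.2 hB.1 hB.2 ha'b
    rw [Nat.sub_self, pow_zero, one_mul] at hL1
    have hlcaab : lca a' b' = lca a b := lca_desc (h-m) a b a' b' hab h1 h2 h3 h4
    have hpsa : pathSum τ (lca a b) a' = pathSum τ a a' + pathSum τ (lca a b) a :=
      pathSum_trans τ (lca a b) a (lca_le' a b).1 ha0 (h-m) a' h1 h2
    have hpsb : pathSum τ (lca a b) b' = pathSum τ b b' + pathSum τ (lca a b) b :=
      pathSum_trans τ (lca a b) b (lca_le' a b).2 hb0 (h-m) b' h3 h4
    rw [hlcaab, hpsa, hpsb] at hL1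
    have hexp : Real.exp (pathSum τ a a') * Real.exp (pathSum τ b b') *
        Real.exp (-(pathSum τ a a' + pathSum τ (lca a b) a +
          (pathSum τ b b' + pathSum τ (lca a b) b)))
        = Real.exp (-(treeDist τ a b)) := by
      rw [← Real.exp_add, ← Real.exp_add, treeDist]
      congr 1
      ring
    calc ∑ x : Fin (2^(h+1)-1) → Φ, gtrP h π Q τ x *
          (((2:ℝ)^(h-m))⁻¹ * ν (x (idx h a')) * Real.exp (pathSum τ a a') *
            (((2:ℝ)^(h-m))⁻¹ * ν (x (idx h b')) * Real.exp (pathSum τ b b')))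
        = (((2:ℝ)^(h-m))⁻¹ * ((2:ℝ)^(h-m))⁻¹ *
            (Real.exp (pathSum τ a a') * Real.exp (pathSum τ b b'))) *
          ∑ x : Fin (2^(h+1)-1) → Φ, gtrAux h π Q τ h x *
            (ν (x (idx h a')) * ν (x (idx h b'))) := by
          rw [Finset.mul_sum]
          refine Finset.sum_congr rfl fun x _ => ?_
          rw [gtrP_eq_gtrAux]
          ring
      _ = (((2:ℝ)^(h-m))⁻¹ * ((2:ℝ)^(h-m))⁻¹ *
            (Real.exp (pathSum τ a a') * Real.exp (pathSum τ b b'))) *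
          Real.exp (-(pathSum τ a a' + pathSum τ (lca a b) a +
            (pathSum τ b b' + pathSum τ (lca a b) b))) := by rw [hL1]
      _ = ((2:ℝ)^(h-m))⁻¹ * ((2:ℝ)^(h-m))⁻¹ * Real.exp (-(treeDist τ a b)) := by
          rw [← hexp]; ring
  calc ∑ x : Fin (2^(h+1)-1) → Φ, gtrP h π Q τ x *
        (estSAt h m ν τ a x * estSAt h m ν τ b x)
      = ∑ x : Fin (2^(h+1)-1) → Φ,
          ∑ a' ∈ Finset.Ico (a * 2^(h-m)) ((a+1) * 2^(h-m)),
            ∑ b' ∈ Finset.Ico (b * 2^(h-m)) ((b+1) * 2^(h-m)),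
              gtrP h π Q τ x *
                (((2:ℝ)^(h-m))⁻¹ * ν (x (idx h a')) * Real.exp (pathSum τ a a') *
                  (((2:ℝ)^(h-m))⁻¹ * ν (x (idx h b')) * Real.exp (pathSum τ b b'))) := by
        refine Finset.sum_congr rfl fun x _ => ?_
        rw [estSAt, estSAt, Finset.sum_mul_sum]
        rw [Finset.mul_sum]
        refine Finset.sum_congr rfl fun a' _ => ?_
        rw [Finset.mul_sum]
    _ = ∑ a' ∈ Finset.Ico (a * 2^(h-m)) ((a+1) * 2^(h-m)),
          ∑ b' ∈ Finset.Ico (b * 2^(h-m)) ((b+1) * 2^(h-m)),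
            ∑ x : Fin (2^(h+1)-1) → Φ,
              gtrP h π Q τ x *
                (((2:ℝ)^(h-m))⁻¹ * ν (x (idx h a')) * Real.exp (pathSum τ a a') *
                  (((2:ℝ)^(h-m))⁻¹ * ν (x (idx h b')) * Real.exp (pathSum τ b b'))) := by
        rw [Finset.sum_comm]
        exact Finset.sum_congr rfl fun a' _ => Finset.sum_comm
    _ = ∑ a' ∈ Finset.Ico (a * 2^(h-m)) ((a+1) * 2^(h-m)),
          ∑ b' ∈ Finset.Ico (b * 2^(h-m)) ((b+1) * 2^(h-m)),
            ((2:ℝ)^(h-m))⁻¹ * ((2:ℝ)^(h-m))⁻¹ * Real.exp (-(treeDist τ a b)) := by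
        refine Finset.sum_congr rfl fun a' ha' => Finset.sum_congr rfl fun b' hb' => ?_
        exact pair a' ha' b' hb'
    _ = Real.exp (-(treeDist τ a b)) := by
        rw [Finset.sum_const, Finset.sum_const, Nat.card_Ico, Nat.card_Ico]
        have hc1 : (a+1) * 2^(h-m) - a * 2^(h-m) = 2^(h-m) := by
          rw [add_mul, one_mul, Nat.add_sub_cancel_left]
        have hc2 : (b+1) * 2^(h-m) - b * 2^(h-m) = 2^(h-m) := by
          rw [add_mul, one_mul, Nat.add_sub_cancel_left]
        rw [hc1, hc2, nsmul_eq_mul, nsmul_eq_mul]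
        push_cast
        calc (2:ℝ)^(h-m) * ((2:ℝ)^(h-m) *
              (((2:ℝ)^(h-m))⁻¹ * ((2:ℝ)^(h-m))⁻¹ * Real.exp (-(treeDist τ a b))))
            = ((2:ℝ)^(h-m) * ((2:ℝ)^(h-m))⁻¹) * ((2:ℝ)^(h-m) * ((2:ℝ)^(h-m))⁻¹) *
              Real.exp (-(treeDist τ a b)) := by ring
          _ = Real.exp (-(treeDist τ a b)) := by
              rw [mul_inv_cancel₀ h2K]; ring
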